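/- arXiv:2506.11347 — 2 statements merged into one kernel-verified Lean document; each statement's English description precedes it below -/
import Mathlib

section
/- Normalization of the Dirichlet density (multivariate Beta integral). Fix K ≥ 2 and α : Fin K → ℝ with α_k > 0 for all k, and set α₀ = ∑_k α_k. Then ∫_S f_α(x) dx = B(α), i.e. the unnormalized Dirichlet density integrates over the open simplex S to the multivariate Beta function B(α) = (∏_k Γ(α_k)) / Γ(α₀). -/
open MeasureTheory Real
open scoped ENNReal NNReal

/-- The open simplex `S = {x ∈ ℝ^{K-1} | ∀ i, 0 < xᵢ ∧ ∑ i, xᵢ < 1}`. -/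
def openSimplex (K : ℕ) : Set (Fin (K - 1) → ℝ) :=
  {x | (∀ i, 0 < x i) ∧ ∑ i, x i < 1}

/-- The `k`-th barycentric coordinate: `X_k(x) = x_k` for `k < K-1`, and
`X_{K-1}(x) = 1 - ∑ i, x_i`. -/
noncomputable def bary (K : ℕ) (k : Fin K) (x : Fin (K - 1) → ℝ) : ℝ :=
  if h : (k : ℕ) < K - 1 then x ⟨k, h⟩ else 1 - ∑ i, x i

/-- The unnormalized Dirichlet density `f_α(x) = ∏ k, X_k(x)^(α k - 1)`
(real powers). -/
noncomputable def dirichletDensity {K : ℕ} (α : Fin K → ℝ) (x : Fin (K - 1) → ℝ) : ℝ :=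
  ∏ k, (bary K k x) ^ (α k - 1)

/-- The multivariate Beta function `B(α) = (∏ k, Γ(α k)) / Γ(∑ k, α k)`. -/
noncomputable def multiBeta {K : ℕ} (α : Fin K → ℝ) : ℝ :=
  (∏ k, Real.Gamma (α k)) / Real.Gamma (∑ k, α k)

lemma mem_openSimplex_iff {n : ℕ} (x : Fin n → ℝ) :
    x ∈ openSimplex (n + 1) ↔ (∀ i, 0 < x i) ∧ ∑ i, x i < 1 := Iff.rfl

lemma bary_castSucc {n : ℕ} (k : Fin n) (x : Fin n → ℝ) :
    bary (n + 1) k.castSucc x = x k := by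
  have hk : ((k.castSucc : Fin (n+1)) : ℕ) < n + 1 - 1 := by simpa using k.isLt
  rw [bary, dif_pos hk]
  rfl

lemma bary_last {n : ℕ} (x : Fin n → ℝ) :
    bary (n + 1) (Fin.last n) x = 1 - ∑ i, x i := by
  have hk : ¬ ((Fin.last n : Fin (n+1)) : ℕ) < n + 1 - 1 := by simp
  rw [bary, dif_neg hk]
  rfl

lemma dirichlet_eq {n : ℕ} (α : Fin (n + 1) → ℝ) (x : Fin n → ℝ) :
    dirichletDensity α x
      = (∏ k : Fin n, (x k) ^ (α k.castSucc - 1))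
        * (1 - ∑ i, x i) ^ (α (Fin.last n) - 1) := by
  rw [dirichletDensity, Fin.prod_univ_castSucc, bary_last]
  congr 1
  exact Finset.prod_congr rfl fun k _ => by rw [bary_castSucc]

lemma measurable_bary (K : ℕ) (k : Fin K) : Measurable (bary K k) := by
  unfold bary
  rcases Nat.lt_or_ge (k : ℕ) (K - 1) with h | h
  · simp only [dif_pos h]
    exact measurable_pi_apply _
  · simp only [dif_neg (Nat.not_lt.2 h)]
    exact measurable_const.sub (Finset.measurable_sum _ fun i _ => measurable_pi_apply i)

lemma measurable_dirichletDensity {K : ℕ} (α : Fin K → ℝ) :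
    Measurable (dirichletDensity α) := by
  unfold dirichletDensity
  refine Finset.measurable_prod _ fun k _ => ?_
  have := measurable_bary K k
  measurability

lemma measurableSet_openSimplex (K : ℕ) : MeasurableSet (openSimplex K) := by
  have : openSimplex K
      = (⋂ i, {x : Fin (K - 1) → ℝ | 0 < x i}) ∩ {x | ∑ i, x i < 1} := by
    ext x; simp [openSimplex, Set.mem_iInter]
  rw [this]
  exact (MeasurableSet.iInter fun i =>
      measurableSet_lt measurable_const (measurable_pi_apply i)).inter
    (measurableSet_lt (Finset.measurable_sum _ fun i _ => measurable_pi_apply i)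
      measurable_const)

lemma snoc_mem_openSimplex_iff {n : ℕ} (y : Fin n → ℝ) (t : ℝ) :
    Fin.snoc y t ∈ openSimplex (n + 2)
      ↔ y ∈ openSimplex (n + 1) ∧ t ∈ Set.Ioo 0 (1 - ∑ i, y i) := by
  have hsum : ∑ i : Fin (n + 1), Fin.snoc y t i = (∑ i : Fin n, y i) + t := by
    rw [Fin.sum_univ_castSucc]
    simp
  rw [mem_openSimplex_iff, mem_openSimplex_iff]
  constructor
  · rintro ⟨hpos, hlt⟩
    rw [hsum] at hlt
    have ht : 0 < t := by simpa using hpos (Fin.last n)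
    refine ⟨⟨fun i => by simpa using hpos i.castSucc, by linarith⟩, ht, by linarith⟩
  · rintro ⟨⟨hpos, _⟩, ht0, ht1⟩
    refine ⟨fun i => ?_, by rw [hsum]; linarith⟩
    refine Fin.lastCases ?_ (fun j => ?_) i <;> simp [hpos, ht0]

lemma dslice {n : ℕ} (F : (Fin (n + 1) → ℝ) → ℝ≥0∞) (hF : Measurable F)
    (S : Set (Fin (n + 1) → ℝ)) (hS : MeasurableSet S) :
    ∫⁻ x in S, F x
      = ∫⁻ y : Fin n → ℝ, ∫⁻ t : ℝ, S.indicator F (Fin.snoc y t) := by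
  rw [← lintegral_indicator hS]
  set e := MeasurableEquiv.piFinSuccAbove (fun _ : Fin (n + 1) => ℝ) (Fin.last n) with he
  have hmp : MeasurePreserving e.symm :=
    (volume_preserving_piFinSuccAbove (fun _ : Fin (n + 1) => ℝ) (Fin.last n)).symm e
  rw [← hmp.lintegral_comp (hF.indicator hS)]
  rw [Measure.volume_eq_prod, lintegral_prod_symm' (fun z : ℝ × (Fin n → ℝ) => S.indicator F (e.symm z)) ((hF.indicator hS).comp e.symm.measurable)]
  congr 1; funext y; congr 1; funext t
  have : e.symm (t, y) = Fin.snoc y t := by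
    simp [he, MeasurableEquiv.piFinSuccAbove_symm_apply, Fin.insertNthEquiv, Fin.insertNth_last']
  rw [this]

lemma realBeta01_integrable {a b : ℝ} (ha : 0 < a) (hb : 0 < b) :
    IntervalIntegrable (fun t : ℝ => t ^ (a - 1) * (1 - t) ^ (b - 1)) volume 0 1 := by
  have h := (Complex.betaIntegral_convergent (u := (a : ℂ)) (v := (b : ℂ))
    (by simpa using ha) (by simpa using hb)).norm
  rw [intervalIntegrable_iff] at h ⊢
  rw [Set.uIoc_of_le (by norm_num : (0:ℝ) ≤ 1)] at h ⊢
  refine h.congr_fun ?_ measurableSet_Ioc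
  intro t ht
  obtain ⟨ht0, ht1⟩ := ht
  have h1 : (0:ℝ) ≤ 1 - t := by linarith
  have e1 : ((t : ℂ)) ^ ((a:ℂ) - 1) = ((t ^ (a - 1) : ℝ) : ℂ) := by
    rw [Complex.ofReal_cpow ht0.le]; push_cast; ring_nf
  have e2 : ((1 : ℂ) - t) ^ ((b:ℂ) - 1) = (((1 - t) ^ (b - 1) : ℝ) : ℂ) := by
    rw [show ((1:ℂ) - t) = (((1 - t : ℝ)) : ℂ) by push_cast; ring,
      Complex.ofReal_cpow h1]
    push_cast; ring_nf
  simp only [e1, e2, ← Complex.ofReal_mul, Complex.norm_real]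
  rw [Real.norm_eq_abs, abs_of_nonneg]
  positivity

lemma realBeta01 {a b : ℝ} (ha : 0 < a) (hb : 0 < b) :
    ∫ t in (0:ℝ)..1, t ^ (a - 1) * (1 - t) ^ (b - 1)
      = Real.Gamma a * Real.Gamma b / Real.Gamma (a + b) := by
  have hab : Real.Gamma (a + b) ≠ 0 := (Real.Gamma_pos_of_pos (by linarith)).ne'
  have key := Complex.Gamma_mul_Gamma_eq_betaIntegral (s := (a:ℂ)) (t := (b:ℂ))
    (by simpa using ha) (by simpa using hb)
  have hbe : Complex.betaIntegral (a:ℂ) (b:ℂ)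
      = ((∫ t in (0:ℝ)..1, t ^ (a - 1) * (1 - t) ^ (b - 1) : ℝ) : ℂ) := by
    rw [Complex.betaIntegral, ← intervalIntegral.integral_ofReal]
    refine intervalIntegral.integral_congr fun t ht => ?_
    rw [Set.uIcc_of_le (by norm_num : (0:ℝ) ≤ 1)] at ht
    obtain ⟨ht0, ht1⟩ := ht
    have h1 : (0:ℝ) ≤ 1 - t := by linarith
    have e1 : ((t : ℂ)) ^ ((a:ℂ) - 1) = ((t ^ (a - 1) : ℝ) : ℂ) := by
      rw [Complex.ofReal_cpow ht0]; push_cast; ring_nf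
    have e2 : ((1 : ℂ) - t) ^ ((b:ℂ) - 1) = (((1 - t) ^ (b - 1) : ℝ) : ℂ) := by
      rw [show ((1:ℂ) - t) = (((1 - t : ℝ)) : ℂ) by push_cast; ring,
        Complex.ofReal_cpow h1]
      push_cast; ring_nf
    simp [e1, e2]
  rw [hbe] at key
  have : ((Real.Gamma a * Real.Gamma b : ℝ) : ℂ)
      = ((Real.Gamma (a + b) * ∫ t in (0:ℝ)..1, t ^ (a - 1) * (1 - t) ^ (b - 1) : ℝ) : ℂ) := by
    push_cast
    rw [← Complex.Gamma_ofReal, ← Complex.Gamma_ofReal, ← Complex.Gamma_ofReal]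
    push_cast
    rw [key]
  have h2 := Complex.ofReal_injective this
  field_simp
  linarith [h2]

lemma realBetaScaled_integrable {a b c : ℝ} (ha : 0 < a) (hb : 0 < b) (hc : 0 < c) :
    IntervalIntegrable (fun t : ℝ => t ^ (a - 1) * (c - t) ^ (b - 1)) volume 0 c := by
  have h0 := realBeta01_integrable ha hb
  have h1 := (h0.comp_mul_right (c := c⁻¹) enorm_ne_top enorm_ne_top).const_mul (c ^ (a - 1) * c ^ (b - 1))
  simp only [zero_div, one_div, inv_inv] at h1
  rw [intervalIntegrable_iff] at h1 ⊢
  rw [Set.uIoc_of_le hc.le] at h1 ⊢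
  refine h1.congr_fun ?_ measurableSet_Ioc
  intro t ht
  obtain ⟨ht0, ht1⟩ := ht
  have htc : t * c⁻¹ ≤ 1 := by
    rw [← div_eq_mul_inv, div_le_one hc]; exact ht1
  have e1 : t ^ (a - 1) = c ^ (a - 1) * (t * c⁻¹) ^ (a - 1) := by
    rw [← Real.mul_rpow hc.le (by positivity)]
    congr 1; field_simp
  have e2 : (c - t) ^ (b - 1) = c ^ (b - 1) * (1 - t * c⁻¹) ^ (b - 1) := by
    rw [← Real.mul_rpow hc.le (by linarith)]
    congr 1; field_simp
  simp only []
  rw [e1, e2]; ring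

lemma realBetaScaled {a b c : ℝ} (ha : 0 < a) (hb : 0 < b) (hc : 0 < c) :
    ∫ t in (0:ℝ)..c, t ^ (a - 1) * (c - t) ^ (b - 1)
      = c ^ (a + b - 1) * (Real.Gamma a * Real.Gamma b / Real.Gamma (a + b)) := by
  have hs := intervalIntegral.smul_integral_comp_mul_left
    (fun t : ℝ => t ^ (a - 1) * (c - t) ^ (b - 1)) c (a := 0) (b := 1)
  simp only [mul_zero, mul_one, smul_eq_mul] at hs
  rw [← hs]
  have : ∀ u ∈ Set.uIcc (0:ℝ) 1,
      (c * u) ^ (a - 1) * (c - c * u) ^ (b - 1)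
        = (c ^ (a - 1) * c ^ (b - 1)) * (u ^ (a - 1) * (1 - u) ^ (b - 1)) := by
    intro u hu
    rw [Set.uIcc_of_le (by norm_num : (0:ℝ) ≤ 1)] at hu
    obtain ⟨hu0, hu1⟩ := hu
    rw [Real.mul_rpow hc.le hu0, show c - c * u = c * (1 - u) by ring,
      Real.mul_rpow hc.le (by linarith)]
    ring
  rw [intervalIntegral.integral_congr this, intervalIntegral.integral_const_mul,
    realBeta01 ha hb]
  rw [show a + b - 1 = (a - 1) + (b - 1) + 1 by ring, Real.rpow_add hc, Real.rpow_add hc,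
    Real.rpow_one]
  ring

lemma innerBeta {a b c : ℝ} (ha : 0 < a) (hb : 0 < b) (hc : 0 < c) :
    ∫⁻ t in Set.Ioo (0:ℝ) c, ENNReal.ofReal (t ^ (a - 1) * (c - t) ^ (b - 1))
      = ENNReal.ofReal (c ^ (a + b - 1) * (Real.Gamma a * Real.Gamma b / Real.Gamma (a + b))) := by
  have hint : IntegrableOn (fun t : ℝ => t ^ (a - 1) * (c - t) ^ (b - 1)) (Set.Ioo 0 c) := by
    refine ((realBetaScaled_integrable ha hb hc).1).mono_set Set.Ioo_subset_Ioc_self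
  rw [← ofReal_integral_eq_lintegral_ofReal hint ?_]
  · rw [← MeasureTheory.integral_Ioc_eq_integral_Ioo,
      ← intervalIntegral.integral_of_le hc.le, realBetaScaled ha hb hc]
  · refine (ae_restrict_iff' measurableSet_Ioo).2 (Filter.Eventually.of_forall ?_)
    intro t ht
    obtain ⟨ht0, htc⟩ := ht
    have : (0:ℝ) < c - t := by linarith
    positivity

lemma dirichlet_aux : ∀ (n : ℕ) (α : Fin (n + 1) → ℝ), (∀ k, 0 < α k) →
    ∫⁻ x in openSimplex (n + 1), ENNReal.ofReal (dirichletDensity α x)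
      = ENNReal.ofReal (multiBeta α) := by
  intro n
  induction n with
  | zero =>
    intro α hα
    have hS : openSimplex 1 = Set.univ := by
      ext x
      simp [openSimplex]
    have hd : ∀ x : Fin 0 → ℝ, dirichletDensity α x = 1 := by
      intro x
      rw [dirichlet_eq]
      simp
    have hmB : multiBeta α = 1 := by
      rw [multiBeta, Fin.prod_univ_one, Fin.sum_univ_one,
        div_self (Real.Gamma_pos_of_pos (hα 0)).ne']
    show ∫⁻ (x : Fin 0 → ℝ) in openSimplex 1, ENNReal.ofReal (dirichletDensity α x) = _
    rw [hS, Measure.restrict_univ, hmB]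
    simp only [hd, ENNReal.ofReal_one]
    rw [lintegral_const, one_mul, MeasureTheory.volume_pi, Measure.pi_univ]
    simp
  | succ n IH =>
    intro α hα
    show ∫⁻ (x : Fin (n + 1) → ℝ) in openSimplex (n + 2), ENNReal.ofReal (dirichletDensity α x)
      = ENNReal.ofReal (multiBeta α)
    set a := α ((Fin.last n).castSucc) with ha_def
    set b := α (Fin.last (n + 1)) with hb_def
    have hGab : Real.Gamma (a + b) ≠ 0 :=
      (Real.Gamma_pos_of_pos (by have := hα ((Fin.last n).castSucc); have := hα (Fin.last (n+1)); linarith)).ne'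
    set Beta : ℝ := Real.Gamma a * Real.Gamma b / Real.Gamma (a + b) with hBeta_def
    have hBeta_nonneg : 0 ≤ Beta := by
      rw [hBeta_def]
      have h1 := Real.Gamma_pos_of_pos (hα ((Fin.last n).castSucc))
      have h2 := Real.Gamma_pos_of_pos (hα (Fin.last (n+1)))
      have h3 : (0:ℝ) < Real.Gamma (a+b) := Real.Gamma_pos_of_pos (by
        have := hα ((Fin.last n).castSucc); have := hα (Fin.last (n+1)); linarith)
      positivity
    set α' : Fin (n + 1) → ℝ :=
      Fin.snoc (fun k : Fin n => α k.castSucc.castSucc) (a + b) with hα'_def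
    have hα'pos : ∀ k, 0 < α' k := by
      intro k
      refine Fin.lastCases ?_ (fun j => ?_) k
      · rw [hα'_def, Fin.snoc_last]
        have := hα ((Fin.last n).castSucc); have := hα (Fin.last (n+1)); linarith
      · rw [hα'_def, Fin.snoc_castSucc]
        exact hα _
    have hsum' : ∑ k, α' k = ∑ k, α k := by
      rw [Fin.sum_univ_castSucc (f := α'), Fin.sum_univ_castSucc (f := α),
        Fin.sum_univ_castSucc (f := fun k : Fin (n + 1) => α k.castSucc)]
      simp only [hα'_def, Fin.snoc_castSucc, Fin.snoc_last]
      ring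
    have hdd : ∀ (y : Fin n → ℝ) (t : ℝ), dirichletDensity α (Fin.snoc y t)
        = (∏ k : Fin n, (y k) ^ (α k.castSucc.castSucc - 1))
          * (t ^ (a - 1) * ((1 - ∑ i, y i) - t) ^ (b - 1)) := by
      intro y t
      rw [dirichlet_eq, Fin.prod_univ_castSucc]
      simp only [Fin.snoc_castSucc, Fin.snoc_last]
      rw [show ∑ i : Fin (n + 1), Fin.snoc y t i = (∑ i, y i) + t from by
        rw [Fin.sum_univ_castSucc]; simp]
      rw [show (1 : ℝ) - ((∑ i, y i) + t) = (1 - ∑ i, y i) - t from by ring]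
      ring
    have hdd' : ∀ y : Fin n → ℝ, dirichletDensity α' y
        = (∏ k : Fin n, (y k) ^ (α k.castSucc.castSucc - 1))
          * (1 - ∑ i, y i) ^ ((a + b) - 1) := by
      intro y
      rw [dirichlet_eq]
      simp only [hα'_def, Fin.snoc_castSucc, Fin.snoc_last]
    rw [dslice _ ((measurable_dirichletDensity α).ennreal_ofReal)
      _ (measurableSet_openSimplex (n + 2))]
    have hinner : ∀ y : Fin n → ℝ,
        (∫⁻ t : ℝ, (openSimplex (n + 2)).indicator
            (fun x => ENNReal.ofReal (dirichletDensity α x)) (Fin.snoc y t))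
          = (openSimplex (n + 1)).indicator
              (fun y => ENNReal.ofReal (Beta * dirichletDensity α' y)) y := by
      intro y
      by_cases hy : y ∈ openSimplex (n + 1)
      · rw [Set.indicator_of_mem hy]
        have hIoo : ∀ t, (openSimplex (n + 2)).indicator
              (fun x => ENNReal.ofReal (dirichletDensity α x)) (Fin.snoc y t)
            = (Set.Ioo 0 (1 - ∑ i, y i)).indicator
                (fun t => ENNReal.ofReal (dirichletDensity α (Fin.snoc y t))) t := by
          intro t
          by_cases ht : t ∈ Set.Ioo 0 (1 - ∑ i, y i)
          · rw [Set.indicator_of_mem ht,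
              Set.indicator_of_mem ((snoc_mem_openSimplex_iff y t).2 ⟨hy, ht⟩)]
          · rw [Set.indicator_of_notMem ht, Set.indicator_of_notMem
              (fun hmem => ht ((snoc_mem_openSimplex_iff y t).1 hmem).2)]
        simp_rw [hIoo]
        rw [lintegral_indicator measurableSet_Ioo]
        obtain ⟨hypos, hys⟩ := (mem_openSimplex_iff y).1 hy
        set c : ℝ := 1 - ∑ i, y i with hc_def
        have hc : 0 < c := by rw [hc_def]; linarith
        set P : ℝ := ∏ k : Fin n, (y k) ^ (α k.castSucc.castSucc - 1) with hP_def
        have hPnn : 0 ≤ P := Finset.prod_nonneg fun k _ =>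
          Real.rpow_nonneg (hypos k).le _
        calc ∫⁻ t in Set.Ioo 0 c, ENNReal.ofReal (dirichletDensity α (Fin.snoc y t))
            = ∫⁻ t in Set.Ioo 0 c, ENNReal.ofReal P
                * ENNReal.ofReal (t ^ (a - 1) * (c - t) ^ (b - 1)) := by
              refine lintegral_congr fun t => ?_
              rw [hdd y t, ENNReal.ofReal_mul hPnn]
          _ = ENNReal.ofReal P
                * ∫⁻ t in Set.Ioo 0 c, ENNReal.ofReal (t ^ (a - 1) * (c - t) ^ (b - 1)) :=
              lintegral_const_mul' _ _ ENNReal.ofReal_ne_top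
          _ = ENNReal.ofReal P * ENNReal.ofReal
                (c ^ (a + b - 1) * (Real.Gamma a * Real.Gamma b / Real.Gamma (a + b))) := by
              rw [innerBeta (hα _) (hα _) hc]
          _ = ENNReal.ofReal (Beta * dirichletDensity α' y) := by
              rw [← ENNReal.ofReal_mul hPnn, hdd' y]
              congr 1
              rw [hBeta_def]
              ring
      · rw [Set.indicator_of_notMem hy]
        have hz : ∀ t : ℝ, (openSimplex (n + 2)).indicator
            (fun x => ENNReal.ofReal (dirichletDensity α x)) (Fin.snoc y t) = 0 := fun t =>
          Set.indicator_of_notMem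
            (fun hmem => hy ((snoc_mem_openSimplex_iff y t).1 hmem).1) _
        simp only [hz]
        exact lintegral_zero
    simp_rw [hinner]
    rw [show (∫⁻ (y : Fin n → ℝ), (openSimplex (n + 1)).indicator
          (fun y => ENNReal.ofReal (Beta * dirichletDensity α' y)) y)
        = ∫⁻ (y : Fin n → ℝ) in openSimplex (n + 1),
            ENNReal.ofReal (Beta * dirichletDensity α' y) from
      lintegral_indicator (measurableSet_openSimplex (n + 1)) _]
    have IH' : ∫⁻ (y : Fin n → ℝ) in openSimplex (n + 1),
        ENNReal.ofReal (dirichletDensity α' y) = ENNReal.ofReal (multiBeta α') := IH α' hα'pos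
    calc ∫⁻ (y : Fin n → ℝ) in openSimplex (n + 1), ENNReal.ofReal (Beta * dirichletDensity α' y)
        = ∫⁻ (y : Fin n → ℝ) in openSimplex (n + 1),
            ENNReal.ofReal Beta * ENNReal.ofReal (dirichletDensity α' y) := by
          refine lintegral_congr fun y => ?_
          rw [ENNReal.ofReal_mul hBeta_nonneg]
      _ = ENNReal.ofReal Beta
            * ∫⁻ (y : Fin n → ℝ) in openSimplex (n + 1), ENNReal.ofReal (dirichletDensity α' y) :=
          lintegral_const_mul' _ _ ENNReal.ofReal_ne_top
      _ = ENNReal.ofReal Beta * ENNReal.ofReal (multiBeta α') := by rw [IH']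
      _ = ENNReal.ofReal (multiBeta α) := by
          rw [← ENNReal.ofReal_mul hBeta_nonneg]
          congr 1
          have hprod' : ∏ k : Fin (n + 1), Real.Gamma (α' k)
              = (∏ k : Fin n, Real.Gamma (α k.castSucc.castSucc)) * Real.Gamma (a + b) := by
            rw [Fin.prod_univ_castSucc (f := fun k => Real.Gamma (α' k))]
            simp only [hα'_def, Fin.snoc_castSucc, Fin.snoc_last]
          have hprod : ∏ k : Fin (n + 2), Real.Gamma (α k)
              = (∏ k : Fin n, Real.Gamma (α k.castSucc.castSucc))
                * Real.Gamma a * Real.Gamma b := by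
            rw [Fin.prod_univ_castSucc (f := fun k => Real.Gamma (α k)),
              Fin.prod_univ_castSucc (f := fun k : Fin (n + 1) => Real.Gamma (α k.castSucc))]
          rw [multiBeta, multiBeta, hsum', hprod', hprod, hBeta_def]
          rw [div_mul_div_comm,
            show Real.Gamma a * Real.Gamma b
                * ((∏ k : Fin n, Real.Gamma (α k.castSucc.castSucc)) * Real.Gamma (a + b))
              = ((∏ k : Fin n, Real.Gamma (α k.castSucc.castSucc))
                  * Real.Gamma a * Real.Gamma b) * Real.Gamma (a + b) from by ring,
            show Real.Gamma (a + b) * Real.Gamma (∑ k : Fin (n + 1 + 1), α k)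
              = Real.Gamma (∑ k : Fin (n + 1 + 1), α k) * Real.Gamma (a + b) from by ring,
            mul_div_mul_right _ _ hGab]

/-- **Normalization of the Dirichlet density (multivariate Beta integral).**
For `K ≥ 2` and `α` with all entries positive, the unnormalized Dirichlet
density integrates over the open simplex to `B(α)`. -/
theorem integral_dirichletDensity
    (K : ℕ) (hK : 2 ≤ K) (α : Fin K → ℝ) (hα : ∀ k, 0 < α k) :
    ∫ x in openSimplex K, dirichletDensity α x = multiBeta α := by
  obtain ⟨n, rfl⟩ : ∃ n, K = n + 2 := ⟨K - 2, by omega⟩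
  have hS := measurableSet_openSimplex (n + 2)
  have hnn : 0 ≤ᵐ[volume.restrict (openSimplex (n + 2))] dirichletDensity α := by
    refine (ae_restrict_iff' hS).2 (Filter.Eventually.of_forall fun x hx => ?_)
    obtain ⟨hpos, hlt⟩ := hx
    refine Finset.prod_nonneg fun k _ => Real.rpow_nonneg ?_ _
    rw [bary]
    split_ifs with h
    · exact (hpos _).le
    · linarith
  have hmB : 0 ≤ multiBeta α := by
    have h1 : 0 < ∏ k, Real.Gamma (α k) :=
      Finset.prod_pos fun k _ => Real.Gamma_pos_of_pos (hα k)
    have h2 : 0 < Real.Gamma (∑ k, α k) :=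
      Real.Gamma_pos_of_pos (Finset.sum_pos (fun k _ => hα k) Finset.univ_nonempty)
    rw [multiBeta]
    exact div_nonneg h1.le h2.le
  rw [MeasureTheory.integral_eq_lintegral_of_nonneg_ae hnn
    ((measurable_dirichletDensity α).aestronglyMeasurable)]
  have haux : (∫⁻ (x : Fin (n + 1) → ℝ) in openSimplex (n + 2),
      ENNReal.ofReal (dirichletDensity α x)) = ENNReal.ofReal (multiBeta α) :=
    dirichlet_aux (n + 1) α hα
  have hfin : ((∫⁻ (x : Fin (n + 1) → ℝ) in openSimplex (n + 2),
      ENNReal.ofReal (dirichletDensity α x)).toReal : ℝ) = multiBeta α := by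
    rw [haux, ENNReal.toReal_ofReal hmB]
  exact hfin
end

section
/- Expected log-probability under a Dirichlet distribution. Fix K ≥ 2 and α : Fin K → ℝ with α_k > 0 for all k, and set α₀ = ∑_k α_k. Then for every k ∈ Fin K, ∫_S log(X_k(x)) · f_α(x) dx = (ψ(α_k) − ψ(α₀)) · B(α); equivalently, under the normalized Dirichlet distribution Dir(α), E[log p_k] = ψ(α_k) − ψ(α₀). -/
open MeasureTheory Real
open scoped ENNReal NNReal

/-- The digamma function `ψ(t)`: the derivative at `t` of `log ∘ Γ`. -/
noncomputable def digamma (t : ℝ) : ℝ :=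
  deriv (fun s => Real.log (Real.Gamma s)) t

lemma complex_real_beta_ae {a b : ℝ} :
    ∀ᵐ (x : ℝ) ∂(volume.restrict (Set.Ioc (0:ℝ) 1)),
      (x:ℂ) ^ ((a:ℂ)-1) * ((1:ℂ)-(x:ℂ)) ^ ((b:ℂ)-1) = ((x ^ (a-1) * (1-x) ^ (b-1) : ℝ) : ℂ) := by
  filter_upwards [ae_restrict_mem measurableSet_Ioc] with x hx
  rw [show ((a:ℂ)-1) = ((a-1 : ℝ) : ℂ) by push_cast; ring,
    show ((b:ℂ)-1) = ((b-1 : ℝ) : ℂ) by push_cast; ring,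
    show ((1:ℂ)-(x:ℂ)) = ((1 - x : ℝ) : ℂ) by push_cast; ring,
    ← Complex.ofReal_cpow hx.1.le, ← Complex.ofReal_cpow (by linarith [hx.2] : (0:ℝ) ≤ 1 - x)]
  push_cast; ring

lemma realBeta_integrable {a b : ℝ} (ha : 0 < a) (hb : 0 < b) :
    IntegrableOn (fun x : ℝ => x ^ (a-1) * (1-x) ^ (b-1)) (Set.Ioc 0 1) := by
  have h := Complex.betaIntegral_convergent (u := (a:ℂ)) (v := (b:ℂ)) (by simpa) (by simpa)
  rw [intervalIntegrable_iff_integrableOn_Ioc_of_le (by norm_num)] at h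
  have h2 : Integrable (fun x : ℝ => ((x ^ (a-1) * (1-x) ^ (b-1) : ℝ) : ℂ))
      (volume.restrict (Set.Ioc (0:ℝ) 1)) := h.congr complex_real_beta_ae
  have := h2.re
  refine this.congr (ae_of_all _ fun x => ?_)
  simp

lemma realBeta_eq {a b : ℝ} (ha : 0 < a) (hb : 0 < b) :
    ∫ x in Set.Ioc (0:ℝ) 1, x ^ (a-1) * (1-x) ^ (b-1) =
      Real.Gamma a * Real.Gamma b / Real.Gamma (a+b) := by
  have key := Complex.Gamma_mul_Gamma_eq_betaIntegral (s := (a:ℂ)) (t := (b:ℂ)) (by simpa) (by simpa)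
  have hbeta : Complex.betaIntegral a b = ((∫ x in Set.Ioc (0:ℝ) 1, x ^ (a-1) * (1-x) ^ (b-1) : ℝ) : ℂ) := by
    rw [Complex.betaIntegral, intervalIntegral.integral_of_le (by norm_num : (0:ℝ) ≤ 1),
      integral_congr_ae complex_real_beta_ae]
    exact integral_ofReal
  rw [hbeta, show (a:ℂ)+(b:ℂ) = ((a+b:ℝ):ℂ) by push_cast; ring, Complex.Gamma_ofReal,
    Complex.Gamma_ofReal, Complex.Gamma_ofReal] at key
  have h3 : Real.Gamma a * Real.Gamma b =
      Real.Gamma (a+b) * ∫ x in Set.Ioc (0:ℝ) 1, x ^ (a-1) * (1-x) ^ (b-1) := by exact_mod_cast key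
  have hne : Real.Gamma (a+b) ≠ 0 := (Real.Gamma_pos_of_pos (by linarith)).ne'
  field_simp
  linarith [h3]

lemma isOpen_openSimplex (K : ℕ) : IsOpen (openSimplex K) := by
  have h1 : IsOpen {x : Fin (K-1) → ℝ | ∀ i, 0 < x i} := by
    rw [Set.setOf_forall]
    exact isOpen_iInter_of_finite fun i =>
      isOpen_lt continuous_const (continuous_apply i)
  have h2 : IsOpen {x : Fin (K-1) → ℝ | ∑ i, x i < 1} :=
    isOpen_lt (continuous_finset_sum _ fun i _ => continuous_apply i) continuous_const
  exact h1.inter h2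

lemma bary_pos {K : ℕ} (hK : 2 ≤ K) {x : Fin (K-1) → ℝ} (hx : x ∈ openSimplex K) (k : Fin K) :
    0 < bary K k x := by
  unfold bary; split
  · exact hx.1 _
  · linarith [hx.2]

lemma bary_lt_one {K : ℕ} (hK : 2 ≤ K) {x : Fin (K-1) → ℝ} (hx : x ∈ openSimplex K) (k : Fin K) :
    bary K k x < 1 := by
  have hpos : ∀ i, 0 < x i := hx.1
  have hsum : ∑ i, x i < 1 := hx.2
  have hKn : 0 < K - 1 := by omega
  have hsum_pos : 0 < ∑ i, x i := by
    refine Finset.sum_pos (fun i _ => hpos i) ?_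
    refine Finset.univ_nonempty_iff.mpr ?_
    exact ⟨⟨0, hKn⟩⟩
  unfold bary; split
  · rename_i h
    calc x ⟨k, h⟩ ≤ ∑ i, x i := Finset.single_le_sum (fun i _ => (hpos i).le) (Finset.mem_univ _)
    _ < 1 := hsum
  · linarith

lemma dirichletDensity_nonneg {K : ℕ} (hK : 2 ≤ K) (α : Fin K → ℝ) {x : Fin (K-1) → ℝ}
    (hx : x ∈ openSimplex K) : 0 ≤ dirichletDensity α x :=
  Finset.prod_nonneg fun k _ => Real.rpow_nonneg (bary_pos hK hx k).le _

lemma bary_eq_apply {K : ℕ} (k : Fin K) (h : (k : ℕ) < K - 1) (x : Fin (K-1) → ℝ) :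
    bary K k x = x ⟨k, h⟩ := dif_pos h

lemma bary_eq_last {K : ℕ} (k : Fin K) (h : ¬ (k : ℕ) < K - 1) (x : Fin (K-1) → ℝ) :
    bary K k x = 1 - ∑ i, x i := dif_neg h

section step
variable (n : ℕ)

/-- insert `u` in front of `y`. -/
def insZ (u : ℝ) (y : Fin (n+1) → ℝ) : Fin (n+2) → ℝ := Fin.insertNth 0 u y

lemma openSimplex_succ2 :
    openSimplex (n+3) = {x : Fin (n+2) → ℝ | (∀ i, 0 < x i) ∧ ∑ i, x i < 1} := rfl

lemma openSimplex_succ1 :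
    openSimplex (n+2) = {x : Fin (n+1) → ℝ | (∀ i, 0 < x i) ∧ ∑ i, x i < 1} := rfl

lemma insZ_apply_zero (u : ℝ) (y : Fin (n+1) → ℝ) : insZ n u y 0 = u :=
  Fin.insertNth_apply_same (α := fun _ : Fin (n+2) => ℝ) 0 u y

lemma insZ_apply_succ (u : ℝ) (y : Fin (n+1) → ℝ) (j : Fin (n+1)) :
    insZ n u y j.succ = y j := by
  have h : (0 : Fin (n+2)).succAbove j = j.succ := by simp [Fin.succAbove_zero]
  have := Fin.insertNth_apply_succAbove (α := fun _ : Fin (n+2) => ℝ) (i := 0) (j := j) (x := u) (p := y)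
  rwa [h] at this

lemma sum_insZ (u : ℝ) (y : Fin (n+1) → ℝ) :
    ∑ i, insZ n u y i = u + ∑ j, y j := by
  rw [Fin.sum_univ_succ, insZ_apply_zero]
  simp [insZ_apply_succ]

lemma mem_S_insZ (u : ℝ) (y : Fin (n+1) → ℝ) :
    insZ n u y ∈ openSimplex (n+3) ↔
      (0 < u ∧ (∀ j, 0 < y j) ∧ u + ∑ j, y j < 1) := by
  rw [openSimplex_succ2]
  show ((∀ i, 0 < insZ n u y i) ∧ ∑ i, insZ n u y i < 1) ↔ _
  rw [Fin.forall_fin_succ, sum_insZ]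
  simp only [insZ_apply_zero, insZ_apply_succ]
  tauto

lemma bary_zero_insZ (u : ℝ) (y : Fin (n+1) → ℝ) :
    bary (n+3) 0 (insZ n u y) = u := by
  rw [bary_eq_apply _ (show ((0 : Fin (n+3)) : ℕ) < n+2 by simp)]
  exact insZ_apply_zero n u y

lemma dd_insZ (α : Fin (n+3) → ℝ) (u : ℝ) (y : Fin (n+1) → ℝ) :
    dirichletDensity α (insZ n u y) =
      u ^ (α 0 - 1) * ∏ j : Fin (n+2), (bary (n+3) j.succ (insZ n u y)) ^ (α j.succ - 1) := by
  show (∏ k : Fin (n+3), _) = _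
  rw [Fin.prod_univ_succ, bary_zero_insZ]

lemma sum_smul_pi (c : ℝ) (z : Fin (n+1) → ℝ) : ∑ j, (c • z) j = c * ∑ j, z j := by
  simp [Finset.mul_sum]

lemma bary_succ_scaled (u : ℝ) (z : Fin (n+1) → ℝ) (j : Fin (n+2)) :
    bary (n+3) j.succ (insZ n u ((1-u) • z)) = (1-u) * bary (n+2) j z := by
  by_cases h : (j : ℕ) < n+1
  · rw [bary_eq_apply _ (show ((j.succ : Fin (n+3)) : ℕ) < n+2 by simp; omega),
      bary_eq_apply _ (show (j : ℕ) < n+2-1 from h)]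
    have h2 : (⟨((j.succ : Fin (n+3)) : ℕ), show ((j.succ : Fin (n+3)) : ℕ) < n+2 by simp; omega⟩ :
        Fin (n+2)) = Fin.succ ⟨(j : ℕ), h⟩ := by
      ext; simp
    rw [h2, insZ_apply_succ]
    simp [Pi.smul_apply, smul_eq_mul]
  · rw [bary_eq_last _ (by simp; omega), bary_eq_last _ (by omega)]
    show 1 - ∑ i, insZ n u ((1-u) • z) i = (1-u) * (1 - ∑ i, z i)
    rw [sum_insZ, sum_smul_pi]
    ring

lemma mem_S_scaled {u : ℝ} (hu : u ∈ Set.Ioo (0:ℝ) 1) (z : Fin (n+1) → ℝ) :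
    insZ n u ((1-u) • z) ∈ openSimplex (n+3) ↔ z ∈ openSimplex (n+2) := by
  obtain ⟨hu0, hu1⟩ := hu
  have h1u : (0:ℝ) < 1 - u := by linarith
  rw [mem_S_insZ, openSimplex_succ1]
  show _ ↔ ((∀ i, 0 < z i) ∧ ∑ i, z i < 1)
  rw [sum_smul_pi]
  constructor
  · rintro ⟨-, hpos, hlt⟩
    refine ⟨fun j => ?_, by nlinarith⟩
    have := hpos j
    simp only [Pi.smul_apply, smul_eq_mul] at this
    nlinarith
  · rintro ⟨hpos, hlt⟩
    refine ⟨hu0, fun j => ?_, by nlinarith⟩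
    simp only [Pi.smul_apply, smul_eq_mul]
    exact mul_pos h1u (hpos j)
end step

lemma prod_scaled (n : ℕ) (β : Fin (n+2) → ℝ) {u : ℝ} (hu : u ∈ Set.Ioo (0:ℝ) 1)
    {z : Fin (n+1) → ℝ} (hz : z ∈ openSimplex (n+2)) :
    ∏ j : Fin (n+2), ((1-u) * bary (n+2) j z) ^ (β j - 1)
      = (1-u) ^ ((∑ j, β j) - (n+2 : ℝ)) * dirichletDensity β z := by
  have h1u : (0:ℝ) < 1 - u := by linarith [hu.2]
  have hb : ∀ j, 0 ≤ bary (n+2) j z := fun j => (bary_pos (by omega) hz j).le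
  rw [Finset.prod_congr rfl (fun j _ => Real.mul_rpow h1u.le (hb j)), Finset.prod_mul_distrib,
    ← Real.rpow_sum_of_pos h1u]
  have hsum : ∑ j : Fin (n+2), (β j - 1) = (∑ j, β j) - (n+2 : ℝ) := by
    rw [Finset.sum_sub_distrib]
    simp [Finset.card_univ]
  rw [hsum]
  rfl

theorem dirichlet_rec (n : ℕ) : ∀ (α : Fin (n+2) → ℝ), (∀ k, 0 < α k) →
    IntegrableOn (dirichletDensity α) (openSimplex (n+2)) ∧
    ∫ x in openSimplex (n+2), dirichletDensity α x = multiBeta α := by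
  induction n with
  | zero =>
    intro α hα
    set e := MeasurableEquiv.funUnique (Fin 1) ℝ with he
    have vp : MeasurePreserving e := volume_preserving_funUnique (Fin 1) ℝ
    have vps : MeasurePreserving e.symm := vp.symm e
    have MS : MeasurableSet (openSimplex 2) := (isOpen_openSimplex 2).measurableSet
    set g := (openSimplex 2).indicator (dirichletDensity α) with hg
    have hS : openSimplex 2 = {x : Fin 1 → ℝ | 0 < x 0 ∧ x 0 < 1} := by
      ext x
      simp [openSimplex, Fin.forall_fin_one, Fin.sum_univ_one]
    have hdd : ∀ x : Fin 1 → ℝ,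
        dirichletDensity α x = (x 0) ^ (α 0 - 1) * (1 - x 0) ^ (α 1 - 1) := by
      intro x
      show (∏ k : Fin 2, (bary 2 k x) ^ (α k - 1)) = _
      rw [Fin.prod_univ_two, show bary 2 0 x = x 0 from dif_pos (by norm_num),
        show bary 2 1 x = 1 - ∑ i, x i from dif_neg (by norm_num), Fin.sum_univ_one]
    have hcomp : (fun t : ℝ => g (e.symm t)) =
        (Set.Ioo (0:ℝ) 1).indicator (fun t => t ^ (α 0 - 1) * (1-t) ^ (α 1 - 1)) := by
      funext t
      have hst : e.symm t = fun _ : Fin 1 => t := rfl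
      have hmem : (e.symm t ∈ openSimplex 2) ↔ t ∈ Set.Ioo (0:ℝ) 1 := by
        rw [hst, hS]; simp [Set.mem_Ioo]
      by_cases h : t ∈ Set.Ioo (0:ℝ) 1
      · rw [Set.indicator_of_mem h, hg, Set.indicator_of_mem (hmem.mpr h), hdd, hst]
      · rw [Set.indicator_of_notMem h, hg, Set.indicator_of_notMem (fun hc => h (hmem.mp hc))]
    have hint' : Integrable ((Set.Ioo (0:ℝ) 1).indicator
        (fun t => t ^ (α 0 - 1) * (1-t) ^ (α 1 - 1))) := by
      rw [integrable_indicator_iff measurableSet_Ioo]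
      exact (realBeta_integrable (hα 0) (hα 1)).mono_set Set.Ioo_subset_Ioc_self
    have hgint : Integrable g := by
      rw [← vps.integrable_comp_emb e.symm.measurableEmbedding,
        show (g ∘ ⇑e.symm) = (fun t : ℝ => g (e.symm t)) from rfl, hcomp]
      exact hint'
    refine ⟨(integrable_indicator_iff MS).mp hgint, ?_⟩
    rw [← integral_indicator MS, ← vps.integral_comp' g]
    show (∫ t : ℝ, g (e.symm t)) = _
    rw [hcomp, integral_indicator measurableSet_Ioo, ← integral_Ioc_eq_integral_Ioo,
      realBeta_eq (hα 0) (hα 1)]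
    show _ = (∏ k : Fin 2, Real.Gamma (α k)) / Real.Gamma (∑ k : Fin 2, α k)
    rw [Fin.prod_univ_two, Fin.sum_univ_two]
  | succ n IH =>
    intro α hα
    have hβ : ∀ j : Fin (n+2), 0 < α j.succ := fun j => hα j.succ
    have ha : 0 < α 0 := hα 0
    have hA : 0 < ∑ j : Fin (n+2), α j.succ :=
      Finset.sum_pos (fun j _ => hβ j) Finset.univ_nonempty
    obtain ⟨IH1, IH2⟩ := IH (fun j => α j.succ) hβ
    set e := MeasurableEquiv.piFinSuccAbove (fun _ : Fin (n+2) => ℝ) 0 with he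
    have vp : MeasurePreserving e := volume_preserving_piFinSuccAbove (fun _ : Fin (n+2) => ℝ) 0
    have vps : MeasurePreserving e.symm := vp.symm e
    have MS : MeasurableSet (openSimplex (n+3)) := (isOpen_openSimplex (n+3)).measurableSet
    have MS' : MeasurableSet (openSimplex (n+2)) := (isOpen_openSimplex (n+2)).measurableSet
    set G := (openSimplex (n+3)).indicator (dirichletDensity α) with hG
    set F : ℝ × (Fin (n+1) → ℝ) → ℝ := fun p => G (e.symm p) with hF
    have hsymm : ∀ (u : ℝ) (y : Fin (n+1) → ℝ), e.symm (u, y) = insZ n u y := fun u y => rfl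
    have hGm : Measurable G := (measurable_dirichletDensity α).indicator MS
    have hFm : Measurable F := hGm.comp e.symm.measurable
    have hGnn : ∀ x, 0 ≤ G x := by
      intro x
      by_cases h : x ∈ openSimplex (n+3)
      · rw [hG, Set.indicator_of_mem h]; exact dirichletDensity_nonneg (by omega) α h
      · rw [hG, Set.indicator_of_notMem h]
    have sec0 : ∀ u : ℝ, u ∉ Set.Ioo (0:ℝ) 1 → ∀ y, F (u, y) = 0 := by
      intro u hu y
      rw [hF]
      simp only
      rw [hsymm, hG, Set.indicator_of_notMem]
      intro hc
      rw [mem_S_insZ] at hc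
      obtain ⟨h0, hpos, hlt⟩ := hc
      have : 0 < ∑ j, y j := Finset.sum_pos (fun j _ => hpos j) Finset.univ_nonempty
      exact hu ⟨h0, by linarith⟩
    have sec1 : ∀ u ∈ Set.Ioo (0:ℝ) 1, (fun z => F (u, (1-u) • z)) =
        (openSimplex (n+2)).indicator
          (fun z => (u ^ (α 0 - 1) * (1-u) ^ ((∑ j : Fin (n+2), α j.succ) - (n+2 : ℝ))) *
            dirichletDensity (fun j => α j.succ) z) := by
      intro u hu
      funext z
      rw [hF]
      simp only
      rw [hsymm, hG]
      by_cases h : z ∈ openSimplex (n+2)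
      · rw [Set.indicator_of_mem ((mem_S_scaled n hu z).mpr h), Set.indicator_of_mem h,
          dd_insZ]
        rw [Finset.prod_congr rfl (fun j _ => by rw [bary_succ_scaled n u z j]),
          prod_scaled n (fun j => α j.succ) hu h]
        ring
      · rw [Set.indicator_of_notMem ((mem_S_scaled n hu z).not.mpr h), Set.indicator_of_notMem h]
    have h1u : ∀ u ∈ Set.Ioo (0:ℝ) 1, (0:ℝ) < 1 - u := fun u hu => by linarith [hu.2]
    have secInt : ∀ u : ℝ, Integrable (fun y => F (u, y)) := by
      intro u
      by_cases hu : u ∈ Set.Ioo (0:ℝ) 1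
      · have hne : (1 - u) ≠ 0 := (h1u u hu).ne'
        refine (integrable_comp_smul_iff (volume : Measure (Fin (n+1) → ℝ))
          (fun y => F (u, y)) hne).mp ?_
        show Integrable (fun z => F (u, (1-u) • z))
        rw [sec1 u hu, integrable_indicator_iff MS']
        exact IH1.const_mul _
      · have hz : (fun y => F (u, y)) = 0 := funext fun y => sec0 u hu y
        rw [hz]
        exact integrable_zero _ _ _
    have secVal : ∀ u : ℝ, (∫ y, F (u, y)) =
        (Set.Ioo (0:ℝ) 1).indicator
          (fun u => u ^ (α 0 - 1) * (1-u) ^ ((∑ j : Fin (n+2), α j.succ) - 1) *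
            multiBeta (fun j => α j.succ)) u := by
      intro u
      by_cases hu : u ∈ Set.Ioo (0:ℝ) 1
      · have h1u' := h1u u hu
        have hcs := Measure.integral_comp_smul (volume : Measure (Fin (n+1) → ℝ))
          (fun y => F (u, y)) (1-u)
        have hlhs : (fun x : Fin (n+1) → ℝ => (fun y => F (u, y)) ((1-u) • x)) =
            (fun z => F (u, (1-u) • z)) := rfl
        rw [hlhs, sec1 u hu] at hcs
        rw [integral_indicator MS', integral_const_mul, IH2] at hcs
        have hrank : Module.finrank ℝ (Fin (n+1) → ℝ) = n + 1 := by simp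
        rw [hrank] at hcs
        have habs : |((1-u) ^ (n+1))⁻¹| = ((1-u) ^ (n+1))⁻¹ := by
          rw [abs_of_nonneg]
          positivity
        rw [habs, smul_eq_mul] at hcs
        have hpow : ((1-u) ^ (n+1) : ℝ) ≠ 0 := by positivity
        have hI : (∫ y, F (u, y)) = (1-u) ^ (n+1) *
            (u ^ (α 0 - 1) * (1-u) ^ ((∑ j : Fin (n+2), α j.succ) - (n+2 : ℝ)) *
              multiBeta (fun j => α j.succ)) := by
          field_simp at hcs
          linarith [hcs]
        rw [hI, Set.indicator_of_mem hu]
        have hrpow : ((1-u) : ℝ) ^ (n+1) * (1-u) ^ ((∑ j : Fin (n+2), α j.succ) - (n+2 : ℝ)) =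
            (1-u) ^ ((∑ j : Fin (n+2), α j.succ) - 1) := by
          rw [← Real.rpow_natCast (1-u) (n+1), ← Real.rpow_add h1u']
          congr 1
          push_cast
          ring
        calc (1-u) ^ (n+1) *
            (u ^ (α 0 - 1) * (1-u) ^ ((∑ j : Fin (n+2), α j.succ) - (n+2 : ℝ)) *
              multiBeta (fun j => α j.succ))
            = ((1-u) ^ (n+1) * (1-u) ^ ((∑ j : Fin (n+2), α j.succ) - (n+2 : ℝ))) *
              (u ^ (α 0 - 1) * multiBeta (fun j => α j.succ)) := by ring
          _ = _ := by rw [hrpow]; ring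
      · rw [Set.indicator_of_notMem hu]
        have hz : (fun y => F (u, y)) = 0 := funext fun y => sec0 u hu y
        rw [hz]
        exact integral_zero _ _
    have hFint : Integrable F := by
      rw [Measure.volume_eq_prod, integrable_prod_iff hFm.aestronglyMeasurable]
      constructor
      · exact ae_of_all _ secInt
      · have hnrm : (fun u => ∫ y, ‖F (u, y)‖) = fun u => ∫ y, F (u, y) := by
          funext u
          exact integral_congr_ae (ae_of_all _ fun y => norm_of_nonneg (hGnn _))
        rw [hnrm, funext secVal, integrable_indicator_iff measurableSet_Ioo]
        exact ((realBeta_integrable ha hA).mono_set Set.Ioo_subset_Ioc_self).mul_const _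
    have hFeG : (fun x => F (e x)) = G := by
      funext x
      rw [hF]
      simp
    have hGint : Integrable G := by
      refine ((vp.integrable_comp_emb e.measurableEmbedding).mpr hFint).congr
        (ae_of_all _ fun x => ?_)
      exact congrFun hFeG x
    refine ⟨(integrable_indicator_iff MS).mp hGint, ?_⟩
    have h1 := vp.integral_comp' F
    rw [hFeG] at h1
    have hFint' : Integrable F ((volume : Measure ℝ).prod volume) := by
      rw [← Measure.volume_eq_prod]; exact hFint
    have h2 : (∫ p, F p) = ∫ u : ℝ, ∫ y : Fin (n+1) → ℝ, F (u, y) := by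
      rw [Measure.volume_eq_prod]
      exact integral_prod F hFint'
    rw [← integral_indicator MS, ← hG, h1, h2]
    rw [integral_congr_ae (ae_of_all _ secVal), integral_indicator measurableSet_Ioo]
    have h3 : (∫ u in Set.Ioo (0:ℝ) 1, u ^ (α 0 - 1) * (1-u) ^ ((∑ j : Fin (n+2), α j.succ) - 1) *
        multiBeta (fun j => α j.succ)) =
        (∫ u in Set.Ioc (0:ℝ) 1, u ^ (α 0 - 1) * (1-u) ^ ((∑ j : Fin (n+2), α j.succ) - 1)) *
          multiBeta (fun j => α j.succ) := by
      rw [← integral_Ioc_eq_integral_Ioo, integral_mul_const]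
    rw [h3, realBeta_eq ha hA]
    have hsum3 : ∑ k : Fin (n+3), α k = α 0 + ∑ j : Fin (n+2), α j.succ := Fin.sum_univ_succ α
    have hprod3 : ∏ k : Fin (n+3), Real.Gamma (α k) =
        Real.Gamma (α 0) * ∏ j : Fin (n+2), Real.Gamma (α j.succ) :=
      Fin.prod_univ_succ _
    show _ = (∏ k : Fin (n+3), Real.Gamma (α k)) / Real.Gamma (∑ k : Fin (n+3), α k)
    rw [hsum3, hprod3,
      show multiBeta (fun j => α j.succ) =
        (∏ j : Fin (n+2), Real.Gamma (α j.succ)) / Real.Gamma (∑ j : Fin (n+2), α j.succ) from rfl]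
    have hGA : Real.Gamma (∑ j : Fin (n+2), α j.succ) ≠ 0 := (Real.Gamma_pos_of_pos hA).ne'
    have hGaA : Real.Gamma (α 0 + ∑ j : Fin (n+2), α j.succ) ≠ 0 :=
      (Real.Gamma_pos_of_pos (by positivity)).ne'
    field_simp

lemma Gamma_hasDerivAt {t : ℝ} (ht : 0 < t) :
    HasDerivAt Real.Gamma (digamma t * Real.Gamma t) t := by
  have hne : ∀ m : ℕ, t ≠ -(m:ℝ) := by
    intro m h
    have := Nat.cast_nonneg (α := ℝ) m
    rw [h] at ht
    linarith
  have hd := (Real.differentiableAt_Gamma hne).hasDerivAt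
  have hpos := Real.Gamma_pos_of_pos ht
  have hlog := hd.log hpos.ne'
  have hdig : digamma t = deriv Real.Gamma t / Real.Gamma t := by
    rw [digamma, hlog.deriv]
  rw [hdig, div_mul_cancel₀ _ hpos.ne']
  exact hd

lemma dd_update (n : ℕ) (α : Fin (n+2) → ℝ) (k : Fin (n+2)) (t : ℝ) (x : Fin (n+1) → ℝ) :
    dirichletDensity (Function.update α k t) x =
      (bary (n+2) k x) ^ (t - 1) *
        ∏ j ∈ Finset.univ.erase k, (bary (n+2) j x) ^ (α j - 1) := by
  show (∏ j : Fin (n+2), (bary (n+2) j x) ^ (Function.update α k t j - 1)) = _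
  rw [← Finset.mul_prod_erase Finset.univ _ (Finset.mem_univ k), Function.update_self]
  congr 1
  exact Finset.prod_congr rfl fun j hj => by
    rw [Function.update_of_ne (Finset.ne_of_mem_erase hj)]

lemma sum_update (n : ℕ) (α : Fin (n+2) → ℝ) (k : Fin (n+2)) (t : ℝ) :
    ∑ j, Function.update α k t j = t + ∑ j ∈ Finset.univ.erase k, α j := by
  rw [← Finset.add_sum_erase Finset.univ _ (Finset.mem_univ k), Function.update_self]
  congr 1
  exact Finset.sum_congr rfl fun j hj => by
    rw [Function.update_of_ne (Finset.ne_of_mem_erase hj)]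

lemma prodGamma_update (n : ℕ) (α : Fin (n+2) → ℝ) (k : Fin (n+2)) (t : ℝ) :
    ∏ j, Real.Gamma (Function.update α k t j) =
      Real.Gamma t * ∏ j ∈ Finset.univ.erase k, Real.Gamma (α j) := by
  rw [← Finset.mul_prod_erase Finset.univ _ (Finset.mem_univ k), Function.update_self]
  congr 1
  exact Finset.prod_congr rfl fun j hj => by
    rw [Function.update_of_ne (Finset.ne_of_mem_erase hj)]

lemma update_pos (n : ℕ) (α : Fin (n+2) → ℝ) (hα : ∀ j, 0 < α j) (k : Fin (n+2)) {t : ℝ}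
    (ht : 0 < t) : ∀ j, 0 < Function.update α k t j := by
  intro j
  rcases eq_or_ne j k with rfl | h
  · rw [Function.update_self]; exact ht
  · rw [Function.update_of_ne h]; exact hα j

lemma multiBeta_update_hasDerivAt (n : ℕ) (α : Fin (n+2) → ℝ) (hα : ∀ j, 0 < α j)
    (k : Fin (n+2)) :
    HasDerivAt (fun t => multiBeta (Function.update α k t))
      ((digamma (α k) - digamma (α k + ∑ j ∈ Finset.univ.erase k, α j)) * multiBeta α) (α k) := by
  set P := ∏ j ∈ Finset.univ.erase k, Real.Gamma (α j) with hP
  set c := ∑ j ∈ Finset.univ.erase k, α j with hc_def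
  have hc : 0 < c := by
    refine Finset.sum_pos (fun j _ => hα j) ?_
    rw [← Finset.card_pos, Finset.card_erase_of_mem (Finset.mem_univ k), Finset.card_univ]
    simp
  have ha := hα k
  have hac : 0 < α k + c := by linarith
  have hΓac : Real.Gamma (α k + c) ≠ 0 := (Real.Gamma_pos_of_pos hac).ne'
  have hΓa := Gamma_hasDerivAt ha
  have hshift : HasDerivAt (fun t => Real.Gamma (t + c))
      (digamma (α k + c) * Real.Gamma (α k + c)) (α k) :=
    HasDerivAt.comp_add_const (x := α k) c (Gamma_hasDerivAt hac)
  have heq : (fun t => multiBeta (Function.update α k t)) =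
      fun t => Real.Gamma t * P / Real.Gamma (t + c) := by
    funext t
    show (∏ j, Real.Gamma (Function.update α k t j)) / Real.Gamma (∑ j, Function.update α k t j) = _
    rw [prodGamma_update, sum_update]
  have hval : multiBeta α = Real.Gamma (α k) * P / Real.Gamma (α k + c) := by
    show (∏ j, Real.Gamma (α j)) / Real.Gamma (∑ j, α j) = _
    rw [← Finset.mul_prod_erase Finset.univ _ (Finset.mem_univ k),
      ← Finset.add_sum_erase Finset.univ _ (Finset.mem_univ k)]
  have hG : HasDerivAt (fun t => Real.Gamma t * P / Real.Gamma (t + c)) _ (α k) :=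
    (hΓa.mul_const P).div hshift hΓac
  rw [heq, hval]
  convert hG using 1
  field_simp

/-- **Expected log-probability under a Dirichlet distribution.**  For `K ≥ 2`
and `α` with positive entries and `α₀ = ∑ k, α k`, for every `k`,
`∫_S log(X_k) f_α = (ψ(α_k) − ψ(α₀)) · B(α)`; i.e. under `Dir(α)`,
`E[log p_k] = ψ(α_k) − ψ(α₀)`. -/
theorem integral_log_bary_mul_dirichletDensity
    (K : ℕ) (hK : 2 ≤ K) (α : Fin K → ℝ) (hα : ∀ k, 0 < α k) (k : Fin K) :
    ∫ x in openSimplex K, Real.log (bary K k x) * dirichletDensity α x =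
      (digamma (α k) - digamma (∑ j, α j)) * multiBeta α := by
  obtain ⟨n, rfl⟩ : ∃ n, K = n + 2 := ⟨K - 2, by omega⟩
  have MS : MeasurableSet (openSimplex (n+2)) := (isOpen_openSimplex (n+2)).measurableSet
  set μ := volume.restrict (openSimplex (n+2)) with hμ
  set a := α k with ha_def
  have ha : 0 < a := hα k
  have hε : (0:ℝ) < a / 4 := by linarith
  set F : ℝ → (Fin (n+1) → ℝ) → ℝ := fun t x => dirichletDensity (Function.update α k t) x
    with hFdef
  set F' : ℝ → (Fin (n+1) → ℝ) → ℝ :=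
    fun t x => Real.log (bary (n+2) k x) * dirichletDensity (Function.update α k t) x with hF'def
  set bound : (Fin (n+1) → ℝ) → ℝ :=
    fun x => (4 / a) * dirichletDensity (Function.update α k (a/2)) x with hbound_def
  have hupd_half : ∀ j, 0 < Function.update α k (a/2) j :=
    update_pos n α hα k (by linarith)
  have hF_meas : ∀ᶠ t in nhds a, AEStronglyMeasurable (F t) μ :=
    Filter.Eventually.of_forall fun t =>
      (measurable_dirichletDensity (K := n+2) (Function.update α k t)).aestronglyMeasurable
  have hF_int : Integrable (F a) μ := by
    have : Function.update α k a = α := Function.update_eq_self k α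
    rw [hFdef]
    simp only [this]
    exact (dirichlet_rec n α hα).1
  have hF'_meas : AEStronglyMeasurable (F' a) μ := by
    refine Measurable.aestronglyMeasurable ?_
    exact ((measurable_bary (n+2) k).log).mul (measurable_dirichletDensity _)
  have h_bound : ∀ᵐ x ∂μ, ∀ t ∈ Metric.ball a (a/4), ‖F' t x‖ ≤ bound x := by
    filter_upwards [ae_restrict_mem MS] with x hx t ht
    have hb0 : 0 < bary (n+2) k x := bary_pos (by omega) hx k
    have hb1 : bary (n+2) k x < 1 := bary_lt_one (by omega) hx k
    set b := bary (n+2) k x with hb_def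
    set R := ∏ j ∈ Finset.univ.erase k, (bary (n+2) j x) ^ (α j - 1) with hR_def
    have hR : 0 ≤ R := Finset.prod_nonneg fun j _ =>
      Real.rpow_nonneg (bary_pos (by omega) hx j).le _
    have htl : a - a/4 < t := by
      rw [Metric.mem_ball, Real.dist_eq, abs_sub_lt_iff] at ht
      linarith [ht.2]
    -- |log b| ≤ b ^ (-(a/4)) / (a/4)
    have hlog : |Real.log b| ≤ b ^ (-(a/4)) / (a/4) := by
      rw [abs_of_neg (Real.log_neg hb0 hb1)]
      rw [le_div_iff₀ hε]
      have h1 : Real.log (b ^ (-(a/4))) ≤ b ^ (-(a/4)) - 1 :=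
        Real.log_le_sub_one_of_pos (Real.rpow_pos_of_pos hb0 _)
      rw [Real.log_rpow hb0] at h1
      nlinarith [Real.rpow_pos_of_pos hb0 (-(a/4))]
    have hbt : b ^ (t - 1) ≤ b ^ (a - a/4 - 1) :=
      Real.rpow_le_rpow_of_exponent_ge hb0 hb1.le (by linarith)
    have key : |Real.log b| * b ^ (t - 1) ≤ (4 / a) * b ^ (a/2 - 1) := by
      have h2 : |Real.log b| * b ^ (t - 1) ≤ (b ^ (-(a/4)) / (a/4)) * b ^ (a - a/4 - 1) :=
        mul_le_mul hlog hbt (Real.rpow_nonneg hb0.le _)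
          (div_nonneg (Real.rpow_nonneg hb0.le _) hε.le)
      have h3 : (b ^ (-(a/4)) / (a/4)) * b ^ (a - a/4 - 1) = (4 / a) * b ^ (a/2 - 1) := by
        rw [div_mul_eq_mul_div, ← Real.rpow_add hb0,
          show -(a/4) + (a - a/4 - 1) = a/2 - 1 by ring]
        field_simp
      linarith [h2, h3.le, h3.ge]
    rw [hF'def]
    simp only
    rw [Real.norm_eq_abs, dd_update, ← hb_def, ← hR_def,
      show Real.log b * (b ^ (t-1) * R) = (Real.log b * b ^ (t-1)) * R by ring,
      abs_mul, abs_mul]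
    rw [hbound_def]
    simp only
    rw [dd_update, ← hb_def, ← hR_def]
    have habs : |b ^ (t-1)| = b ^ (t-1) := abs_of_nonneg (Real.rpow_nonneg hb0.le _)
    have habsR : |R| = R := abs_of_nonneg hR
    rw [habs, habsR]
    calc |Real.log b| * b ^ (t-1) * R ≤ ((4/a) * b ^ (a/2 - 1)) * R :=
          mul_le_mul_of_nonneg_right key hR
      _ = 4 / a * (b ^ (a/2 - 1) * R) := by ring
  have bound_int : Integrable bound μ := by
    rw [hbound_def]
    exact ((dirichlet_rec n _ hupd_half).1).const_mul _
  have h_diff : ∀ᵐ x ∂μ, ∀ t ∈ Metric.ball a (a/4), HasDerivAt (fun t => F t x) (F' t x) t := by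
    filter_upwards [ae_restrict_mem MS] with x hx t _
    have hb0 : 0 < bary (n+2) k x := bary_pos (by omega) hx k
    set b := bary (n+2) k x with hb_def
    set R := ∏ j ∈ Finset.univ.erase k, (bary (n+2) j x) ^ (α j - 1) with hR_def
    have heq : (fun t => F t x) = fun t => b ^ (t - 1) * R := by
      funext s
      rw [hFdef]
      simp only
      rw [dd_update, ← hb_def, ← hR_def]
    have h1 : HasDerivAt (fun s : ℝ => Real.log b * (s - 1)) (Real.log b) t := by
      simpa using ((hasDerivAt_id t).sub_const 1).const_mul (Real.log b)
    have h2 := h1.exp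
    have h3 : HasDerivAt (fun s : ℝ => b ^ (s - 1)) (b ^ (t - 1) * Real.log b) t := by
      have hfun : (fun s : ℝ => Real.exp (Real.log b * (s - 1))) = fun s : ℝ => b ^ (s - 1) := by
        funext s
        rw [← Real.rpow_def_of_pos hb0]
      have hval : Real.exp (Real.log b * (t - 1)) = b ^ (t - 1) := by
        rw [← Real.rpow_def_of_pos hb0]
      rw [hfun, hval] at h2
      exact h2
    have h4 := h3.mul_const R
    rw [heq]
    have hF'val : F' t x = b ^ (t - 1) * Real.log b * R := by
      rw [hF'def]
      simp only
      rw [dd_update, ← hb_def, ← hR_def]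
      ring
    rw [hF'val]
    exact h4
  obtain ⟨-, hD⟩ := hasDerivAt_integral_of_dominated_loc_of_deriv_le (Metric.ball_mem_nhds a hε) hF_meas hF_int hF'_meas
    h_bound bound_int h_diff
  have hFeq : (fun t => multiBeta (Function.update α k t)) =ᶠ[nhds a]
      (fun t => ∫ x, F t x ∂μ) := by
    filter_upwards [isOpen_Ioi.mem_nhds (show a ∈ Set.Ioi (0:ℝ) from ha)] with t ht
    exact ((dirichlet_rec n _ (update_pos n α hα k ht)).2).symm
  have hD' := hD.congr_of_eventuallyEq hFeq
  have hM := multiBeta_update_hasDerivAt n α hα k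
  have huniq := hD'.unique hM
  have hsum : ∑ j, α j = α k + ∑ j ∈ Finset.univ.erase k, α j :=
    (Finset.add_sum_erase Finset.univ _ (Finset.mem_univ k)).symm
  rw [hsum, ← huniq]
  have hfin : F' a = fun x => Real.log (bary (n+2) k x) * dirichletDensity α x := by
    rw [hF'def]
    simp only [Function.update_eq_self]
    rw [ha_def, Function.update_eq_self]
    rfl
  rw [← hfin]
end
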